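/- A subset of ℝ_max^n is a max-plus polyhedron (i.e., an intersection of finitely many affine half-spaces) if, and only if, it is of the form co(Z) ⊕ cone(Y) for some finite subsets Z, Y of ℝ_max^n. -/

import Mathlib

noncomputable section

/-- The max-plus (tropical) semiring `ℝ ∪ {-∞}`:
addition is `max`, multiplication is `+` (with `-∞` absorbing). -/
abbrev Rmax : Type := WithBot ℝ

/-- A max-plus (tropical) cone: a set stable under max-plus linear combinations. -/
def IsTropCone {ι : Type} (V : Set (ι → Rmax)) : Prop :=
  ∀ u ∈ V, ∀ w ∈ V, ∀ lam mu : Rmax, (fun i => max (lam + u i) (mu + w i)) ∈ V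

/-- `tropCone X`: the set of all max-plus linear combinations of finitely many
elements of `X`. -/
def tropCone {ι : Type} (X : Set (ι → Rmax)) : Set (ι → Rmax) :=
  {x | ∃ (m : ℕ) (lam : Fin m → Rmax) (w : Fin m → ι → Rmax),
        (∀ s, w s ∈ X) ∧ x = fun i => Finset.univ.sup (fun s => lam s + w s i)}

/-- `tropCo X`: max-plus convex combinations (coefficients with maximum `0 = 𝟙`)
of finitely many elements of `X`. -/
def tropCo {ι : Type} (X : Set (ι → Rmax)) : Set (ι → Rmax) :=
  {x | ∃ (m : ℕ) (lam : Fin m → Rmax) (w : Fin m → ι → Rmax),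
        (∀ s, w s ∈ X) ∧ Finset.univ.sup lam = (0 : Rmax) ∧
        x = fun i => Finset.univ.sup (fun s => lam s + w s i)}

/-- Max-plus Minkowski sum of two subsets. -/
def tropSum {ι : Type} (A B : Set (ι → Rmax)) : Set (ι → Rmax) :=
  {z | ∃ a ∈ A, ∃ b ∈ B, z = fun i => max (a i) (b i)}

/-- A half-space of `ℝ_max^ι`. -/
def IsHalfSpace {ι : Type} [Fintype ι] (H : Set (ι → Rmax)) : Prop :=
  ∃ a b : ι → Rmax,
    H = {x | Finset.univ.sup (fun i => a i + x i) ≤ Finset.univ.sup (fun j => b j + x j)}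

/-- An affine half-space of `ℝ_max^ι`. -/
def IsAffineHalfSpace {ι : Type} [Fintype ι] (H : Set (ι → Rmax)) : Prop :=
  ∃ (a b : ι → Rmax) (c d : Rmax),
    H = {x | max (Finset.univ.sup (fun i => a i + x i)) c ≤
             max (Finset.univ.sup (fun j => b j + x j)) d}

/-- A max-plus polyhedron: an intersection of finitely many affine half-spaces. -/
def IsPolyhedron {ι : Type} [Fintype ι] (C : Set (ι → Rmax)) : Prop :=
  ∃ (m : ℕ) (H : Fin m → Set (ι → Rmax)),
    (∀ k, IsAffineHalfSpace (H k)) ∧ C = ⋂ k, H k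

/-- The recession cone of a max-plus convex set. -/
def recessionCone {ι : Type} (C : Set (ι → Rmax)) : Set (ι → Rmax) :=
  {u | ∃ x ∈ C, ∀ lam : Rmax, (fun i => max (x i) (lam + u i)) ∈ C}

/-- A half-space minimal (for inclusion) among the half-spaces containing `V`. -/
def IsMinimalHalfSpace {ι : Type} [Fintype ι] (V H : Set (ι → Rmax)) : Prop :=
  IsHalfSpace H ∧ V ⊆ H ∧ ¬ ∃ H', IsHalfSpace H' ∧ V ⊆ H' ∧ H' ⊂ H

/-- The half-space written in normal form: `max_{i ∈ I} (a i + x i) ≤ max_{j ∈ J} (a j + x j)`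
(the sup over an empty index set being `⊥ = -∞`). -/
def halfSpace {ι : Type} (I J : Finset ι) (a : ι → ℝ) : Set (ι → Rmax) :=
  {x | I.sup (fun i => ((a i : Rmax)) + x i) ≤ J.sup (fun j => ((a j : Rmax)) + x j)}

/-- The max-plus cone generated by the vectors `v 0, …, v (p-1)` (finite entries). -/
def genCone {ι : Type} [Fintype ι] {p : ℕ} (v : Fin p → ι → ℝ) : Set (ι → Rmax) :=
  {x | ∃ lam : Fin p → Rmax, x = fun i => Finset.univ.sup (fun r => lam r + ((v r i : Rmax)))}

/-- `S_j(x)`: the `j`-th component of the type of `x` relative to the generators `v`. -/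
def typeSet {ι : Type} {p : ℕ} (v : Fin p → ι → ℝ) (x : ι → ℝ) (j : ι) : Set (Fin p) :=
  {r | v r j - x j = ⨆ k, (v r k - x k)}

/-- `V` has full support. -/
def HasFullSupport {ι : Type} (V : Set (ι → Rmax)) : Prop :=
  ∀ k : ι, ∃ v ∈ V, v k ≠ ⊥

/-- `x` is a vertex of the natural cell decomposition induced by the generators `v`:
the cell of `type(x)` consists exactly of the (finite) scalar multiples of `x`. -/
def IsVertex {ι : Type} {p : ℕ} (v : Fin p → ι → ℝ) (x : ι → ℝ) : Prop :=
  {y : ι → ℝ | ∀ j, typeSet v x j ⊆ typeSet v y j} = {y | ∃ c : ℝ, y = fun i => c + x i}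

/-- The `i`-th max-plus unit vector. -/
def unitVec {ι : Type} [DecidableEq ι] (i : ι) : ι → Rmax :=
  fun k => if k = i then (0 : Rmax) else ⊥

/-- The vector `⊕_{j ∈ J} b j ⊙ e^j`. -/
def jVec {ι : Type} [DecidableEq ι] (J : Finset ι) (b : ι → ℝ) : ι → Rmax :=
  fun k => if k ∈ J then ((b k : Rmax)) else ⊥

/-- The polar of a max-plus cone: the set of (pairs defining) half-spaces containing it. -/
def polar {ι : Type} [Fintype ι] (V : Set (ι → Rmax)) : Set ((ι → Rmax) × (ι → Rmax)) :=
  {q | ∀ x ∈ V, Finset.univ.sup (fun i => q.1 i + x i) ≤ Finset.univ.sup (fun j => q.2 j + x j)}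

/-- Extreme vector of a max-plus cone of pairs (e.g. the polar). -/
def IsExtremePair {ι : Type} (W : Set ((ι → Rmax) × (ι → Rmax)))
    (z : (ι → Rmax) × (ι → Rmax)) : Prop :=
  z ∈ W ∧ z ≠ (fun _ => (⊥ : Rmax), fun _ => (⊥ : Rmax)) ∧
    ∀ u ∈ W, ∀ w ∈ W,
      z = (fun i => max (u.1 i) (w.1 i), fun i => max (u.2 i) (w.2 i)) → z = u ∨ z = w

/-- Extreme point of a max-plus convex set. -/
def IsExtremePoint {ι : Type} (C : Set (ι → Rmax)) (z : ι → Rmax) : Prop :=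
  z ∈ C ∧ ∀ u ∈ C, ∀ w ∈ C, ∀ lam mu : Rmax, max lam mu = (0 : Rmax) →
    z = (fun i => max (lam + u i) (mu + w i)) → z = u ∨ z = w

/-- Extreme vector of a max-plus cone. -/
def IsExtremeVector {ι : Type} (W : Set (ι → Rmax)) (z : ι → Rmax) : Prop :=
  z ∈ W ∧ z ≠ (fun _ => (⊥ : Rmax)) ∧
    ∀ u ∈ W, ∀ w ∈ W, z = (fun i => max (u i) (w i)) → z = u ∨ z = w

/-- Projection of a subset of `ℝ_max^ι` onto the coordinates indexed by `K`. -/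
def projCone {ι : Type} (K : Finset ι) (V : Set (ι → Rmax)) :
    Set ({k : ι // k ∈ K} → Rmax) :=
  {y | ∃ x ∈ V, y = fun k => x k.1}

namespace StmtAux

lemma add_fsup {β : Type*} (s : Finset β) (f : β → Rmax) (c : Rmax) :
    c + s.sup f = s.sup (fun b => c + f b) := by
  rw [Finset.comp_sup_eq_sup_comp (c + ·)]
  · rfl
  · intro x y; exact add_max c x y
  · exact WithBot.add_bot c

lemma fsup_add {β : Type*} (s : Finset β) (f : β → Rmax) (c : Rmax) :
    s.sup f + c = s.sup (fun b => f b + c) := by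
  rw [add_comm, add_fsup]; simp [add_comm]

lemma coe_neg_add_coe (γ : ℝ) : ((-γ : ℝ) : Rmax) + (γ : ℝ) = 0 := by
  rw [← WithBot.coe_add]; norm_num

lemma cancel₁ (u : Rmax) (γ : ℝ) : (u + ((-γ : ℝ) : Rmax)) + (γ : ℝ) = u := by
  rw [add_assoc, coe_neg_add_coe, add_zero]

lemma cancel₂ (u v : Rmax) (γ : ℝ) : (u + ((-γ : ℝ) : Rmax)) + (v + ((γ : ℝ) : Rmax)) = u + v := by
  rw [add_add_add_comm, coe_neg_add_coe, add_zero]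

lemma sup_equiv {β γ : Type*} [Fintype β] [Fintype γ] (e : β ≃ γ) (f : γ → Rmax) :
    Finset.univ.sup (fun b => f (e b)) = Finset.univ.sup f := by
  apply le_antisymm
  · exact Finset.sup_le fun b _ => Finset.le_sup (Finset.mem_univ (e b))
  · refine Finset.sup_le fun c _ => ?_
    have := Finset.le_sup (f := fun b => f (e b)) (Finset.mem_univ (e.symm c))
    simpa using this

lemma sup_enum {β : Type*} (s : Finset β) (f : β → Rmax) :
    Finset.univ.sup (fun i : Fin s.card => f (s.equivFin.symm i)) = s.sup f := by
  conv_rhs => rw [← Finset.sup_attach, ← Finset.univ_eq_attach]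
  exact sup_equiv s.equivFin.symm (fun x : {x // x ∈ s} => f ↑x)

lemma sup_fin_add {m k : ℕ} (f : Fin (m + k) → Rmax) :
    Finset.univ.sup f =
      max (Finset.univ.sup fun s : Fin m => f (Fin.castAdd k s))
          (Finset.univ.sup fun t : Fin k => f (Fin.natAdd m t)) := by
  apply le_antisymm
  · refine Finset.sup_le fun j _ => ?_
    induction j using Fin.addCases with
    | left s =>
        exact le_trans (Finset.le_sup (f := fun s : Fin m => f (Fin.castAdd k s)) (Finset.mem_univ s)) (le_max_left _ _)
    | right t =>
        exact le_trans (Finset.le_sup (f := fun t : Fin k => f (Fin.natAdd m t)) (Finset.mem_univ t)) (le_max_right _ _)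
  · exact max_le (Finset.sup_le fun s _ => Finset.le_sup (Finset.mem_univ _))
      (Finset.sup_le fun t _ => Finset.le_sup (Finset.mem_univ _))

lemma sup_fin_succ {N : ℕ} (f : Fin (N + 1) → Rmax) :
    Finset.univ.sup f =
      max (Finset.univ.sup fun i : Fin N => f i.castSucc) (f (Fin.last N)) := by
  apply le_antisymm
  · refine Finset.sup_le fun j _ => ?_
    induction j using Fin.lastCases with
    | last => exact le_max_right _ _
    | cast i =>
        exact le_trans (Finset.le_sup (f := fun i : Fin N => f i.castSucc) (Finset.mem_univ i)) (le_max_left _ _)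
  · exact max_le (Finset.sup_le fun i _ => Finset.le_sup (Finset.mem_univ _))
      (Finset.le_sup (Finset.mem_univ _))

lemma sup_filter_split {β : Type*} [Fintype β] [DecidableEq β] (p : β → Prop) [DecidablePred p] (f : β → Rmax) :
    Finset.univ.sup f =
      max ((Finset.univ.filter p).sup f) ((Finset.univ.filter (fun b => ¬ p b)).sup f) := by
  rw [← Finset.sup_union, Finset.filter_union_filter_not_eq]

lemma sup_max_split {β : Type*} [Fintype β] (f g : β → Rmax) :
    Finset.univ.sup (fun b => max (f b) (g b)) =
      max (Finset.univ.sup f) (Finset.univ.sup g) := by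
  apply le_antisymm
  · exact Finset.sup_le fun b _ =>
      max_le_max (Finset.le_sup (f := f) (Finset.mem_univ b)) (Finset.le_sup (f := g) (Finset.mem_univ b))
  · refine max_le (Finset.sup_le fun b _ => ?_) (Finset.sup_le fun b _ => ?_)
    · exact le_trans (le_max_left (f b) (g b)) (Finset.le_sup (f := fun b => max (f b) (g b)) (Finset.mem_univ b))
    · exact le_trans (le_max_right (f b) (g b)) (Finset.le_sup (f := fun b => max (f b) (g b)) (Finset.mem_univ b))

lemma ne_bot_of_le {c d : Rmax} (h : c ≤ d) (hc : c ≠ ⊥) : d ≠ ⊥ := by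
  rintro rfl; exact hc (le_bot_iff.mp h)

lemma coe_unbot' {c : Rmax} (hc : c ≠ ⊥) : (((WithBot.unbotD 0 c : ℝ)) : Rmax) = c := by
  obtain ⟨γ, rfl⟩ := WithBot.ne_bot_iff_exists.mp hc
  simp



/-- max-plus scalar product. -/
def dot {N : ℕ} (a x : Fin N → Rmax) : Rmax := Finset.univ.sup fun i => a i + x i

/-- cone generated by a finite family. -/
def coneIx {N : ℕ} {ι : Type} [Fintype ι] (g : ι → Fin N → Rmax) : Set (Fin N → Rmax) :=
  {x | ∃ lam : ι → Rmax, x = fun i => Finset.univ.sup fun r => lam r + g r i}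

/-- homogeneous halfspace. -/
def hsSet {N : ℕ} (a b : Fin N → Rmax) : Set (Fin N → Rmax) := {x | dot a x ≤ dot b x}

lemma dot_comb {N : ℕ} {ι : Type} [Fintype ι] (a : Fin N → Rmax) (lam : ι → Rmax)
    (w : ι → Fin N → Rmax) :
    dot a (fun i => Finset.univ.sup fun r => lam r + w r i) =
      Finset.univ.sup fun r => lam r + dot a (w r) := by
  unfold dot
  have : ∀ i : Fin N, (a i + Finset.univ.sup fun r => lam r + w r i)
      = Finset.univ.sup fun r => lam r + (a i + w r i) := by
    intro i
    rw [add_fsup]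
    exact Finset.sup_congr rfl fun r _ => by rw [add_left_comm]
  rw [Finset.sup_congr rfl fun i _ => this i, Finset.sup_comm]
  exact Finset.sup_congr rfl fun r _ => (add_fsup _ _ _).symm

lemma dot_bot {N : ℕ} (x : Fin N → Rmax) : dot (fun _ => ⊥) x = ⊥ := by
  refine le_antisymm (Finset.sup_le fun i _ => ?_) bot_le
  simp [WithBot.bot_add]

lemma mem_coneIx_of_comb {N : ℕ} {ι υ : Type} [Fintype ι] [Fintype υ]
    (g : ι → Fin N → Rmax) (mu : υ → Rmax) (h : υ → Fin N → Rmax)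
    (hh : ∀ u, h u ∈ coneIx g) :
    (fun i => Finset.univ.sup fun u => mu u + h u i) ∈ coneIx g := by
  choose lam hlam using hh
  refine ⟨fun r => Finset.univ.sup fun u => mu u + lam u r, funext fun i => ?_⟩
  have : ∀ u, mu u + h u i = Finset.univ.sup fun r => (mu u + lam u r) + g r i := by
    intro u
    rw [hlam u, add_fsup]
    exact Finset.sup_congr rfl fun r _ => by rw [add_assoc]
  rw [Finset.sup_congr rfl fun u _ => this u, Finset.sup_comm]
  exact Finset.sup_congr rfl fun r _ => (fsup_add _ _ _).symm

lemma single_mem_coneIx {N : ℕ} {ι : Type} [Fintype ι] [DecidableEq ι]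
    (g : ι → Fin N → Rmax) (r : ι) (c : Rmax) :
    (fun i => c + g r i) ∈ coneIx g := by
  refine ⟨fun r' => if r' = r then c else ⊥, funext fun i => ?_⟩
  apply le_antisymm
  · refine le_trans ?_ (Finset.le_sup (f := fun r' => (if r' = r then c else ⊥) + g r' i)
      (Finset.mem_univ r))
    simp
  · refine Finset.sup_le fun r' _ => ?_
    by_cases h : r' = r
    · subst h; simp
    · simp [h, WithBot.bot_add]

lemma gen_mem_coneIx {N : ℕ} {ι : Type} [Fintype ι] [DecidableEq ι]
    (g : ι → Fin N → Rmax) (r : ι) : g r ∈ coneIx g := by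
  have := single_mem_coneIx g r 0
  simpa [zero_add] using this

lemma bot_mem_coneIx {N : ℕ} {ι : Type} [Fintype ι] (g : ι → Fin N → Rmax) :
    (fun _ => (⊥ : Rmax)) ∈ coneIx g := by
  refine ⟨fun _ => ⊥, funext fun i => ?_⟩
  refine le_antisymm bot_le (Finset.sup_le fun r _ => ?_)
  simp [WithBot.bot_add]

lemma pair_mem_coneIx {N : ℕ} {ι : Type} [Fintype ι] [DecidableEq ι]
    (g : ι → Fin N → Rmax) (r t : ι) (c₁ c₂ : Rmax) :
    (fun i => max (c₁ + g r i) (c₂ + g t i)) ∈ coneIx g := by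
  have h1 := single_mem_coneIx g r c₁
  have h2 := single_mem_coneIx g t c₂
  have := mem_coneIx_of_comb g (fun u : Fin 2 => (0 : Rmax))
    (fun u => if u = 0 then (fun i => c₁ + g r i) else (fun i => c₂ + g t i))
    (fun u => by by_cases h : u = 0 <;> simp [h, h1, h2])
  convert this using 2 with i
  rw [show (Finset.univ : Finset (Fin 2)) = {0, 1} from rfl]
  simp [Finset.sup_insert, zero_add]

lemma hs_comb_closed {N : ℕ} {υ : Type} [Fintype υ] (a b : Fin N → Rmax)
    (mu : υ → Rmax) (h : υ → Fin N → Rmax) (hh : ∀ u, h u ∈ hsSet a b) :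
    (fun i => Finset.univ.sup fun u => mu u + h u i) ∈ hsSet a b := by
  show dot a _ ≤ dot b _
  rw [dot_comb, dot_comb]
  exact Finset.sup_le fun u _ => le_trans (add_le_add le_rfl (hh u))
    (Finset.le_sup (f := fun u => mu u + dot b (h u)) (Finset.mem_univ u))

lemma dot_max {N : ℕ} (a u v : Fin N → Rmax) :
    dot a (fun i => max (u i) (v i)) = max (dot a u) (dot a v) := by
  unfold dot
  rw [← sup_max_split]
  exact Finset.sup_congr rfl fun i _ => add_max _ _ _

lemma dot_smul {N : ℕ} (a : Fin N → Rmax) (c : Rmax) (u : Fin N → Rmax) :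
    dot a (fun i => c + u i) = c + dot a u := by
  unfold dot
  rw [add_fsup]
  exact Finset.sup_congr rfl fun i _ => by rw [add_left_comm]

lemma coneIx_reindex {N : ℕ} {ι ι' : Type} [Fintype ι] [Fintype ι'] (e : ι' ≃ ι)
    (g : ι → Fin N → Rmax) : coneIx (fun r' => g (e r')) = coneIx g := by
  ext x
  constructor
  · rintro ⟨lam, rfl⟩
    refine ⟨fun r => lam (e.symm r), funext fun i => ?_⟩
    rw [← sup_equiv e (fun r => lam (e.symm r) + g r i)]
    simp
  · rintro ⟨lam, rfl⟩
    refine ⟨fun r' => lam (e r'), funext fun i => ?_⟩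
    rw [← sup_equiv e (fun r => lam r + g r i)]


lemma dot_bot_right {N : ℕ} (a : Fin N → Rmax) : dot a (fun _ => ⊥) = ⊥ := by
  refine le_antisymm (Finset.sup_le fun i _ => ?_) bot_le
  simp [WithBot.add_bot]

lemma add_ne_bot' {u v : Rmax} (hu : u ≠ ⊥) (hv : v ≠ ⊥) : u + v ≠ ⊥ := by
  obtain ⟨γ, rfl⟩ := WithBot.ne_bot_iff_exists.mp hu
  obtain ⟨δ, rfl⟩ := WithBot.ne_bot_iff_exists.mp hv
  rw [← WithBot.coe_add]; exact WithBot.coe_ne_bot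

lemma cancel₁' (u : Rmax) (γ : ℝ) : (u + ((γ : ℝ) : Rmax)) + ((-γ : ℝ) : Rmax) = u := by
  have := cancel₁ u (-γ)
  rwa [neg_neg] at this

lemma cancel₂' (u v : Rmax) (γ : ℝ) :
    (u + ((γ : ℝ) : Rmax)) + (v + ((-γ : ℝ) : Rmax)) = u + v := by
  have := cancel₂ u v (-γ)
  rwa [neg_neg] at this

lemma coneIx_inter_hs {N : ℕ} {ι₀ : Type} [Fintype ι₀] (g : ι₀ → Fin N → Rmax)
    (a b : Fin N → Rmax) :
    ∃ (ι : Type) (_ : Fintype ι) (h : ι → Fin N → Rmax),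
      coneIx h = coneIx g ∩ hsSet a b := by
  classical
  set pa : ι₀ → Rmax := fun r => dot a (g r) with hpa
  set pb : ι₀ → Rmax := fun r => dot b (g r) with hpb
  set P : ι₀ → Prop := fun r => pa r ≤ pb r with hP
  set h : ι₀ ⊕ ι₀ × ι₀ → Fin N → Rmax := Sum.elim
      (fun r => if P r then g r else fun _ => ⊥)
      (fun rt => if P rt.1 then
        (fun i => max (pa rt.2 + g rt.1 i) (pb rt.1 + g rt.2 i)) else fun _ => ⊥) with hdef
  refine ⟨ι₀ ⊕ ι₀ × ι₀, inferInstance, h, ?_⟩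
  have hgen : ∀ u, h u ∈ coneIx g ∩ hsSet a b := by
    rintro (r | ⟨r, t⟩)
    · by_cases hPr : P r
      · refine ⟨?_, ?_⟩
        · simpa [hdef, hPr] using gen_mem_coneIx g r
        · simp only [hsSet, Set.mem_setOf_eq, hdef, Sum.elim_inl, if_pos hPr]
          exact hPr
      · refine ⟨?_, ?_⟩
        · simpa [hdef, hPr] using bot_mem_coneIx g
        · simp [hdef, hPr, hsSet, dot_bot_right]
    · by_cases hPr : P r
      · refine ⟨?_, ?_⟩
        · simpa [hdef, hPr] using pair_mem_coneIx g r t (pa t) (pb r)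
        · show dot a _ ≤ dot b _
          have ha : dot a (h (Sum.inr (r, t))) = max (pa t + pa r) (pb r + pa t) := by
            simp only [hdef, Sum.elim_inr, if_pos hPr]
            rw [dot_max, dot_smul, dot_smul]
          have hb : dot b (h (Sum.inr (r, t))) = max (pa t + pb r) (pb r + pb t) := by
            simp only [hdef, Sum.elim_inr, if_pos hPr]
            rw [dot_max, dot_smul, dot_smul]
          rw [ha, hb]
          refine max_le ?_ ?_
          · exact le_trans (add_le_add le_rfl hPr) (le_max_left _ _)
          · rw [add_comm]
            exact le_max_left _ _
      · refine ⟨?_, ?_⟩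
        · simpa [hdef, hPr] using bot_mem_coneIx g
        · simp [hdef, hPr, hsSet, dot_bot_right]
  apply Set.Subset.antisymm
  · rintro x ⟨mu, rfl⟩
    exact ⟨mem_coneIx_of_comb g mu h (fun u => (hgen u).1),
      hs_comb_closed a b mu h (fun u => (hgen u).2)⟩
  · rintro x ⟨⟨lam, rfl⟩, hx⟩
    have hax : dot a (fun i => Finset.univ.sup fun r => lam r + g r i)
        = Finset.univ.sup fun r => lam r + pa r := dot_comb a lam g
    have hbx : dot b (fun i => Finset.univ.sup fun r => lam r + g r i)
        = Finset.univ.sup fun r => lam r + pb r := dot_comb b lam g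
    rw [hsSet, Set.mem_setOf_eq, hax, hbx] at hx
    have key : ∀ t, ¬ P t → lam t ≠ ⊥ → ∃ r, P r ∧ lam t + pa t ≤ lam r + pb r := by
      intro t hPt hlt
      have : Nonempty ι₀ := ⟨t⟩
      set v : Rmax := Finset.univ.sup (fun r => if P r then lam r + pb r else ⊥) with hv
      have hbv : (Finset.univ.sup fun r => lam r + pb r) ≤ v := by
        by_contra hcon
        push_neg at hcon
        obtain ⟨r0, -, hr0⟩ := Finset.exists_mem_eq_sup Finset.univ Finset.univ_nonempty
          (fun r => lam r + pb r)
        by_cases hPr0 : P r0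
        · have hle : lam r0 + pb r0 ≤ v := by
            refine le_trans ?_ (Finset.le_sup (f := fun r => if P r then lam r + pb r else ⊥)
              (Finset.mem_univ r0))
            simp only [if_pos hPr0, le_refl]
          rw [hr0] at hcon
          exact absurd hle (not_le.mpr hcon)
        · by_cases hl0 : lam r0 = ⊥
          · rw [hr0, hl0, WithBot.bot_add] at hcon
            exact not_lt_bot hcon
          · have hlt2 : pb r0 < pa r0 := not_le.mp hPr0
            have h1 : lam r0 + pb r0 < lam r0 + pa r0 := WithBot.add_lt_add_left hl0 hlt2
            have h2 : lam r0 + pa r0 ≤ Finset.univ.sup fun r => lam r + pa r :=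
              Finset.le_sup (f := fun r => lam r + pa r) (Finset.mem_univ r0)
            have h3 := lt_of_lt_of_le (lt_of_lt_of_le h1 h2) hx
            rw [← hr0] at h3
            exact lt_irrefl _ h3
      have hta : lam t + pa t ≤ v := by
        refine le_trans ?_ hbv
        refine le_trans ?_ hx
        exact Finset.le_sup (f := fun r => lam r + pa r) (Finset.mem_univ t)
      have hpat : pa t ≠ ⊥ := by
        intro hbotpa
        exact hPt (show pa t ≤ pb t by rw [hbotpa]; exact bot_le)
      have htne : lam t + pa t ≠ ⊥ := add_ne_bot' hlt hpat
      have hvne : v ≠ ⊥ := ne_bot_of_le hta htne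
      have : Nonempty ι₀ := ⟨t⟩
      obtain ⟨r1, -, hr1⟩ := Finset.exists_mem_eq_sup Finset.univ Finset.univ_nonempty
        (fun r => if P r then lam r + pb r else ⊥)
      rw [← hv] at hr1
      by_cases hPr1 : P r1
      · rw [hr1, if_pos hPr1] at hta
        exact ⟨r1, hPr1, hta⟩
      · rw [hr1, if_neg hPr1] at hvne
        exact absurd rfl hvne
    set β : ι₀ → ℝ := fun r => WithBot.unbotD 0 (pb r) with hβdef
    set mu : ι₀ ⊕ ι₀ × ι₀ → Rmax := Sum.elim (fun r => if P r then lam r else ⊥)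
      (fun rt => if P rt.1 ∧ ¬ P rt.2 ∧ lam rt.2 + pa rt.2 ≤ lam rt.1 + pb rt.1
        then lam rt.2 + ((-(β rt.1) : ℝ) : Rmax) else ⊥) with hmu
    refine ⟨mu, funext fun i => ?_⟩
    apply le_antisymm
    · refine Finset.sup_le fun r _ => ?_
      by_cases hPr : P r
      · have e0 : lam r + g r i = mu (Sum.inl r) + h (Sum.inl r) i := by
          simp [hmu, hdef, hPr]
        rw [e0]
        exact Finset.le_sup (f := fun u => mu u + h u i) (Finset.mem_univ (Sum.inl r))
      · by_cases hl : lam r = ⊥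
        · rw [hl, WithBot.bot_add]; exact bot_le
        · obtain ⟨r1, hPr1, hineq⟩ := key r hPr hl
          have hpat : pa r ≠ ⊥ := fun hb => hPr (show pa r ≤ pb r by rw [hb]; exact bot_le)
          have hpbne : pb r1 ≠ ⊥ := by
            have h1 : lam r1 + pb r1 ≠ ⊥ := ne_bot_of_le hineq (add_ne_bot' hl hpat)
            intro hb
            rw [hb, WithBot.add_bot] at h1
            exact h1 rfl
          have hβ : ((β r1 : ℝ) : Rmax) = pb r1 := coe_unbot' hpbne
          have hcond : P r1 ∧ ¬ P r ∧ lam r + pa r ≤ lam r1 + pb r1 := ⟨hPr1, hPr, hineq⟩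
          have e0 : lam r + g r i = (lam r + ((-(β r1) : ℝ) : Rmax)) + (pb r1 + g r i) := by
            rw [← hβ, ← cancel₂ (lam r) (g r i) (β r1), add_comm (g r i)]
          have e1 : (lam r + ((-(β r1) : ℝ) : Rmax)) + (pb r1 + g r i)
              ≤ mu (Sum.inr (r1, r)) + h (Sum.inr (r1, r)) i := by
            have hmuval : mu (Sum.inr (r1, r)) = lam r + ((-(β r1) : ℝ) : Rmax) := by
              simp only [hmu, Sum.elim_inr, if_pos hcond]
            have hhval : h (Sum.inr (r1, r)) i = max (pa r + g r1 i) (pb r1 + g r i) := by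
              simp only [hdef, Sum.elim_inr, if_pos hPr1]
            rw [hmuval, hhval]
            exact add_le_add le_rfl (le_max_right _ _)
          rw [e0]
          exact le_trans e1 (Finset.le_sup (f := fun u => mu u + h u i)
            (Finset.mem_univ (Sum.inr (r1, r))))
    · refine Finset.sup_le fun u _ => ?_
      match u with
      | Sum.inl r =>
        by_cases hPr : P r
        · have e0 : mu (Sum.inl r) + h (Sum.inl r) i = lam r + g r i := by
            simp [hmu, hdef, hPr]
          rw [e0]
          exact Finset.le_sup (f := fun r => lam r + g r i) (Finset.mem_univ r)
        · have e0 : mu (Sum.inl r) = ⊥ := by simp [hmu, hPr]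
          rw [e0, WithBot.bot_add]
          exact bot_le
      | Sum.inr (r, t) =>
        by_cases hcond : P r ∧ ¬ P t ∧ lam t + pa t ≤ lam r + pb r
        · obtain ⟨hPr, hPt, hineq⟩ := hcond
          have hcond' : P r ∧ ¬ P t ∧ lam t + pa t ≤ lam r + pb r := ⟨hPr, hPt, hineq⟩
          have hmuval : mu (Sum.inr (r, t)) = lam t + ((-(β r) : ℝ) : Rmax) := by
            simp only [hmu, Sum.elim_inr, if_pos hcond']
          have hhval : h (Sum.inr (r, t)) i = max (pa t + g r i) (pb r + g t i) := by
            simp only [hdef, Sum.elim_inr, if_pos hPr]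
          by_cases hl : lam t = ⊥
          · rw [hmuval, hl, WithBot.bot_add, WithBot.bot_add]
            exact bot_le
          · have hpat : pa t ≠ ⊥ := fun hb => hPt (show pa t ≤ pb t by rw [hb]; exact bot_le)
            have hpbne : pb r ≠ ⊥ := by
              have h1 : lam r + pb r ≠ ⊥ := ne_bot_of_le hineq (add_ne_bot' hl hpat)
              intro hb
              rw [hb, WithBot.add_bot] at h1
              exact h1 rfl
            have hβ : ((β r : ℝ) : Rmax) = pb r := coe_unbot' hpbne
            rw [hmuval, hhval, add_max]
            refine max_le ?_ ?_
            · have e1 : (lam t + ((-(β r) : ℝ) : Rmax)) + (pa t + g r i)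
                  = ((lam t + pa t) + ((-(β r) : ℝ) : Rmax)) + g r i := by
                abel
              rw [e1]
              have e2 : ((lam t + pa t) + ((-(β r) : ℝ) : Rmax)) + g r i
                  ≤ ((lam r + pb r) + ((-(β r) : ℝ) : Rmax)) + g r i :=
                add_le_add (add_le_add hineq le_rfl) le_rfl
              refine le_trans e2 ?_
              have e3 : ((lam r + pb r) + ((-(β r) : ℝ) : Rmax)) = lam r := by
                rw [← hβ]
                exact cancel₁' (lam r) (β r)
              rw [e3]
              exact Finset.le_sup (f := fun r => lam r + g r i) (Finset.mem_univ r)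
            · have e1 : (lam t + ((-(β r) : ℝ) : Rmax)) + (pb r + g t i) = lam t + g t i := by
                rw [← hβ]
                have := cancel₂ (lam t) (g t i) (β r)
                rw [← this, add_comm (g t i)]
              rw [e1]
              exact Finset.le_sup (f := fun r => lam r + g r i) (Finset.mem_univ t)
        · have e0 : mu (Sum.inr (r, t)) = ⊥ := by
            simp only [hmu, Sum.elim_inr, if_neg hcond]
          rw [e0, WithBot.bot_add]
          exact bot_le

theorem iInter_hs_eq_coneIx {N m : ℕ} (a b : Fin m → Fin N → Rmax) :
    ∃ (ι : Type) (_ : Fintype ι) (g : ι → Fin N → Rmax),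
      (⋂ k, hsSet (a k) (b k)) = coneIx g := by
  induction m with
  | zero =>
    refine ⟨Fin N, inferInstance, fun i => fun k => if k = i then (0 : Rmax) else ⊥, ?_⟩
    rw [Set.iInter_of_empty]
    ext x
    simp only [Set.mem_univ, true_iff]
    refine ⟨x, funext fun j => ?_⟩
    show x j = Finset.univ.sup fun r => x r + (fun k => if k = r then (0:Rmax) else ⊥) j
    apply le_antisymm
    · refine le_trans (le_of_eq ?_)
        (Finset.le_sup (f := fun r => x r + (fun k => if k = r then (0:Rmax) else ⊥) j)
          (Finset.mem_univ j))
      simp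
    · refine Finset.sup_le fun r _ => ?_
      by_cases hr : j = r
      · subst hr; simp
      · simp [hr, WithBot.add_bot]
  | succ m ih =>
    obtain ⟨ι, hι, g, hg⟩ := ih (fun k => a k.castSucc) (fun k => b k.castSucc)
    obtain ⟨ι', hι', h, hh⟩ := @coneIx_inter_hs N ι hι g (a (Fin.last m)) (b (Fin.last m))
    refine ⟨ι', hι', h, ?_⟩
    rw [hh, ← hg]
    ext x
    simp only [Set.mem_iInter, Set.mem_inter_iff]
    constructor
    · intro hx
      exact ⟨fun k => hx k.castSucc, hx (Fin.last m)⟩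
    · rintro ⟨h1, h2⟩ k
      induction k using Fin.lastCases with
      | last => exact h2
      | cast k => exact h1 k

lemma coneIx_eq_tropCone {N : ℕ} {ι : Type} [Fintype ι] (g : ι → Fin N → Rmax) :
    coneIx g = tropCone (Set.range g) := by
  classical
  ext x
  constructor
  · rintro ⟨lam, rfl⟩
    set e := Fintype.equivFin ι with he
    refine ⟨Fintype.card ι, fun s => lam (e.symm s), fun s => g (e.symm s),
      fun s => Set.mem_range_self _, funext fun i => ?_⟩
    exact (sup_equiv e.symm (fun r => lam r + g r i)).symm
  · rintro ⟨m, lam, w, hw, rfl⟩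
    choose ρ hρ using hw
    refine ⟨fun r => Finset.univ.sup fun s => if ρ s = r then lam s else ⊥, funext fun i => ?_⟩
    apply le_antisymm
    · refine Finset.sup_le fun s _ => ?_
      have : lam s + w s i ≤ (Finset.univ.sup fun s' => if ρ s' = ρ s then lam s' else ⊥) + g (ρ s) i := by
        refine add_le_add ?_ (le_of_eq (congrFun (hρ s) i).symm)
        · refine le_trans (le_of_eq (if_pos rfl).symm)
            (Finset.le_sup (f := fun s' => if ρ s' = ρ s then lam s' else ⊥) (Finset.mem_univ s))
      refine le_trans this ?_
      exact Finset.le_sup (f := fun r => (Finset.univ.sup fun s' => if ρ s' = r then lam s' else ⊥) + g r i)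
        (Finset.mem_univ (ρ s))
    · refine Finset.sup_le fun r _ => ?_
      rw [fsup_add]
      refine Finset.sup_le fun s _ => ?_
      by_cases hyp : ρ s = r
      · subst hyp
        rw [if_pos rfl]
        have : g (ρ s) i = w s i := congrFun (hρ s) i
        rw [this]
        exact Finset.le_sup (f := fun s => lam s + w s i) (Finset.mem_univ s)
      · rw [if_neg hyp, WithBot.bot_add]
        exact bot_le

lemma bot_mem_tropCone {n : ℕ} (X : Set (Fin n → Rmax)) :
    (fun _ => (⊥ : Rmax)) ∈ tropCone X := by
  refine ⟨0, Fin.elim0, Fin.elim0, fun s => s.elim0, funext fun i => ?_⟩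
  simp

lemma tropCone_sdiff_bot {n : ℕ} (X : Set (Fin n → Rmax)) :
    tropCone (X \ {fun _ => (⊥ : Rmax)}) = tropCone X := by
  classical
  ext x
  constructor
  · rintro ⟨m, lam, w, hw, rfl⟩
    exact ⟨m, lam, w, fun s => (hw s).1, rfl⟩
  · rintro ⟨m, lam, w, hw, rfl⟩
    by_cases hex : ∃ w0 ∈ X, w0 ≠ (fun _ => (⊥ : Rmax))
    · obtain ⟨w0, hw0X, hw0⟩ := hex
      refine ⟨m, fun s => if w s = (fun _ => (⊥ : Rmax)) then ⊥ else lam s,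
        fun s => if w s = (fun _ => (⊥ : Rmax)) then w0 else w s, fun s => ?_, funext fun i => ?_⟩
      · by_cases hb : w s = (fun _ => (⊥ : Rmax))
        · simp only [if_pos hb]; exact ⟨hw0X, hw0⟩
        · simp only [if_neg hb]; exact ⟨hw s, hb⟩
      · refine (Finset.sup_congr rfl fun s _ => ?_).symm
        by_cases hb : w s = (fun _ => (⊥ : Rmax))
        · simp [if_pos hb, WithBot.bot_add, hb, WithBot.add_bot]
        · simp only [if_neg hb]
    · push_neg at hex
      have hx : (fun i => Finset.univ.sup fun s => lam s + w s i) = (fun _ => (⊥ : Rmax)) := by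
        funext i
        refine le_antisymm (Finset.sup_le fun s _ => ?_) bot_le
        rw [hex (w s) (hw s)]
        rw [WithBot.add_bot]
      rw [hx]
      exact bot_mem_tropCone _

/-- dehomogenization of a vector with non-bot last coordinate -/
def dh {n : ℕ} (w : Fin (n+1) → Rmax) : Fin n → Rmax :=
  fun i => w i.castSucc + ((-((WithBot.unbotD 0 (w (Fin.last n)) : ℝ)) : ℝ) : Rmax)

def dhZ {n : ℕ} (W : Set (Fin (n+1) → Rmax)) : Set (Fin n → Rmax) :=
  dh '' {w | w ∈ W ∧ w (Fin.last n) ≠ ⊥}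

def dhY {n : ℕ} (W : Set (Fin (n+1) → Rmax)) : Set (Fin n → Rmax) :=
  (fun w => fun i : Fin n => w i.castSucc) '' {w | w ∈ W ∧ w (Fin.last n) = ⊥}

lemma fin_cast_or_nat {mZ mY : ℕ} (t : Fin (mZ + mY)) :
    (∃ s : Fin mZ, t = Fin.castAdd mY s) ∨ (∃ s : Fin mY, t = Fin.natAdd mZ s) := by
  by_cases h : (t : ℕ) < mZ
  · exact Or.inl ⟨⟨t, h⟩, by ext; simp⟩
  · push_neg at h
    refine Or.inr ⟨⟨(t : ℕ) - mZ, by omega⟩, ?_⟩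
    ext
    simp [Fin.natAdd]
    omega

theorem homog {n : ℕ} (W : Set (Fin (n+1) → Rmax)) (x : Fin n → Rmax) :
    Fin.snoc x (0 : Rmax) ∈ tropCone W ↔ x ∈ tropSum (tropCo (dhZ W)) (tropCone (dhY W)) := by
  classical
  constructor
  · rintro ⟨m, lam, w, hw, hx⟩
    set γ : Fin m → ℝ := fun s => (WithBot.unbotD 0 (w s (Fin.last n)) : ℝ) with hγ
    set mu : Fin m → Rmax := fun s => lam s + w s (Fin.last n) with hmu
    set P : Fin m → Prop := fun s => w s (Fin.last n) ≠ ⊥ with hP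
    set sZ : Finset (Fin m) := Finset.univ.filter P with hsZ
    set sY : Finset (Fin m) := Finset.univ.filter (fun s => ¬ P s) with hsY
    have hlast : (0 : Rmax) = Finset.univ.sup (fun s => lam s + w s (Fin.last n)) := by
      have := congrFun hx (Fin.last n)
      rwa [Fin.snoc_last] at this
    have hcast : ∀ i : Fin n, x i = Finset.univ.sup (fun s => lam s + w s i.castSucc) := by
      intro i
      have := congrFun hx i.castSucc
      rwa [Fin.snoc_castSucc] at this
    have hYbot : ∀ s ∈ sY, w s (Fin.last n) = ⊥ := by
      intro s hs
      have := (Finset.mem_filter.mp hs).2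
      exact not_not.mp this
    have hZne : ∀ s ∈ sZ, w s (Fin.last n) ≠ ⊥ := fun s hs => (Finset.mem_filter.mp hs).2
    have hmuZ : ∀ s ∈ sZ, mu s = lam s + ((γ s : ℝ) : Rmax) := by
      intro s hs
      rw [hmu]
      simp only []
      rw [coe_unbot' (hZne s hs)]
    have hsupmu : sZ.sup mu = 0 := by
      have h1 : Finset.univ.sup (fun s => lam s + w s (Fin.last n))
          = max (sZ.sup fun s => lam s + w s (Fin.last n))
                (sY.sup fun s => lam s + w s (Fin.last n)) := by
        rw [hsZ, hsY]; exact sup_filter_split P _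
      have h2 : (sY.sup fun s => lam s + w s (Fin.last n)) = ⊥ := by
        refine le_antisymm (Finset.sup_le fun s hs => ?_) bot_le
        rw [hYbot s hs, WithBot.add_bot]
      rw [h2] at h1
      have : (0 : Rmax) = sZ.sup fun s => lam s + w s (Fin.last n) := by
        rw [hlast, h1, sup_bot_eq]
      exact this.symm
    refine ⟨fun i => sZ.sup (fun s => lam s + w s i.castSucc), ?_,
      fun i => sY.sup (fun s => lam s + w s i.castSucc), ?_, ?_⟩
    · refine ⟨sZ.card, fun k => mu (sZ.equivFin.symm k), fun k => dh (w (sZ.equivFin.symm k)),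
        ?_, ?_, ?_⟩
      · intro k
        exact ⟨w (sZ.equivFin.symm k), ⟨hw _, hZne _ (sZ.equivFin.symm k).2⟩, rfl⟩
      · rw [sup_enum sZ mu, hsupmu]
      · funext i
        rw [sup_enum sZ (fun s => mu s + dh (w s) i)]
        refine Finset.sup_congr rfl fun s hs => ?_
        rw [hmuZ s hs]
        rw [show dh (w s) i = w s i.castSucc + ((-(γ s) : ℝ) : Rmax) from rfl]
        exact (cancel₂' (lam s) (w s i.castSucc) (γ s)).symm
    · refine ⟨sY.card, fun k => lam (sY.equivFin.symm k),
        fun k => (fun i => w (sY.equivFin.symm k) i.castSucc), ?_, ?_⟩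
      · intro k
        exact ⟨w (sY.equivFin.symm k), ⟨hw _, hYbot _ (sY.equivFin.symm k).2⟩, rfl⟩
      · funext i
        rw [sup_enum sY (fun s => lam s + w s i.castSucc)]
    · funext i
      rw [hcast i]
      show Finset.univ.sup (fun s => lam s + w s i.castSucc)
          = max (sZ.sup fun s => lam s + w s i.castSucc) (sY.sup fun s => lam s + w s i.castSucc)
      rw [hsZ, hsY]
      exact sup_filter_split P _
  · rintro ⟨u, ⟨mZ, mu, z, hzmem, hmusup, hu⟩, v, ⟨mY, lamY, y, hymem, hv⟩, hx⟩
    choose wZ hwZ hzeq using hzmem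
    choose wY hwY hyeq using hymem
    set γ : Fin mZ → ℝ := fun s => (WithBot.unbotD 0 (wZ s (Fin.last n)) : ℝ) with hγ
    set lam'' : Fin (mZ + mY) → Rmax :=
      Fin.addCases (fun s => mu s + ((-(γ s) : ℝ) : Rmax)) lamY with hlam''
    set w'' : Fin (mZ + mY) → Fin (n+1) → Rmax := Fin.addCases wZ wY with hw''
    have hlamL : ∀ s : Fin mZ, lam'' (Fin.castAdd mY s) = mu s + ((-(γ s) : ℝ) : Rmax) := by
      intro s; rw [hlam'']; simp
    have hlamR : ∀ s : Fin mY, lam'' (Fin.natAdd mZ s) = lamY s := by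
      intro s; rw [hlam'']; simp
    have hwL : ∀ s : Fin mZ, w'' (Fin.castAdd mY s) = wZ s := by
      intro s; rw [hw'']; simp
    have hwR : ∀ s : Fin mY, w'' (Fin.natAdd mZ s) = wY s := by
      intro s; rw [hw'']; simp
    refine ⟨mZ + mY, lam'', w'', ?_, ?_⟩
    · intro t
      rcases fin_cast_or_nat t with ⟨s, rfl⟩ | ⟨s, rfl⟩
      · rw [hwL s]; exact (hwZ s).1
      · rw [hwR s]; exact (hwY s).1
    · funext j
      show (Fin.snoc x (0 : Rmax) : Fin (n+1) → Rmax) j = Finset.univ.sup fun t => lam'' t + w'' t j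
      rw [sup_fin_add (fun t => lam'' t + w'' t j)]
      have hLs : (Finset.univ.sup fun s : Fin mZ => lam'' (Fin.castAdd mY s) + w'' (Fin.castAdd mY s) j)
          = Finset.univ.sup fun s : Fin mZ => (mu s + ((-(γ s) : ℝ) : Rmax)) + wZ s j :=
        Finset.sup_congr rfl fun s _ => by rw [hlamL s, hwL s]
      have hRs : (Finset.univ.sup fun s : Fin mY => lam'' (Fin.natAdd mZ s) + w'' (Fin.natAdd mZ s) j)
          = Finset.univ.sup fun s : Fin mY => lamY s + wY s j :=
        Finset.sup_congr rfl fun s _ => by rw [hlamR s, hwR s]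
      rw [hLs, hRs]
      induction j using Fin.lastCases with
      | last =>
        rw [Fin.snoc_last]
        have h1 : ∀ s : Fin mZ, (mu s + ((-(γ s) : ℝ) : Rmax)) + wZ s (Fin.last n) = mu s := by
          intro s
          rw [← coe_unbot' (hwZ s).2]
          exact cancel₁ (mu s) (γ s)
        have h2 : ∀ s : Fin mY, lamY s + wY s (Fin.last n) = ⊥ := by
          intro s
          rw [(hwY s).2, WithBot.add_bot]
        rw [Finset.sup_congr rfl (fun s _ => h1 s), Finset.sup_congr rfl (fun s _ => h2 s)]
        have h3 : (Finset.univ.sup fun _ : Fin mY => (⊥ : Rmax)) = ⊥ :=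
          le_antisymm (Finset.sup_le fun _ _ => le_rfl) bot_le
        rw [hmusup, h3, sup_bot_eq]
      | cast i =>
        rw [Fin.snoc_castSucc]
        have h1 : ∀ s : Fin mZ,
            (mu s + ((-(γ s) : ℝ) : Rmax)) + wZ s i.castSucc = mu s + z s i := by
          intro s
          rw [← hzeq s]
          show _ = mu s + (wZ s i.castSucc + ((-(γ s) : ℝ) : Rmax))
          abel
        have h2 : ∀ s : Fin mY, lamY s + wY s i.castSucc = lamY s + y s i := by
          intro s
          rw [← hyeq s]
        rw [Finset.sup_congr rfl (fun s _ => h1 s), Finset.sup_congr rfl (fun s _ => h2 s)]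
        rw [congrFun hx i, congrFun hu i, congrFun hv i]

lemma dot_unit {N : ℕ} (i : Fin N) (x : Fin N → Rmax) :
    dot (fun k => if k = i then (0 : Rmax) else ⊥) x = x i := by
  apply le_antisymm
  · refine Finset.sup_le fun k _ => ?_
    by_cases hk : k = i
    · subst hk; simp
    · simp [hk, WithBot.bot_add]
  · refine le_trans (le_of_eq ?_)
      (Finset.le_sup (f := fun k => (if k = i then (0:Rmax) else ⊥) + x k) (Finset.mem_univ i))
    simp

theorem coneIx_eq_iInter_hs {N p : ℕ} (g : Fin p → Fin N → Rmax)
    (hg : ∀ r, ∃ j, g r j ≠ ⊥) :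
    ∃ aF bF : Fin N × (Fin p → Fin N) → Fin N → Rmax,
      coneIx g = ⋂ q, hsSet (aF q) (bF q) := by
  classical
  set ρ : Fin p → (Fin p → Fin N) → ℝ := fun r φ => (WithBot.unbotD 0 (g r (φ r)) : ℝ) with hρdef
  set Valid : (Fin p → Fin N) → Prop := fun φ => ∀ r, g r (φ r) ≠ ⊥ with hValid
  set Bv : Fin N → (Fin p → Fin N) → Fin N → Rmax := fun i φ j =>
    Finset.univ.sup fun r => if φ r = j then g r i + ((-(ρ r φ) : ℝ) : Rmax) else ⊥ with hBv
  set aF : Fin N × (Fin p → Fin N) → Fin N → Rmax := fun q =>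
    if Valid q.2 then (fun k => if k = q.1 then (0 : Rmax) else ⊥) else fun _ => ⊥ with haF
  set bF : Fin N × (Fin p → Fin N) → Fin N → Rmax := fun q =>
    if Valid q.2 then Bv q.1 q.2 else fun _ => ⊥ with hbF
  refine ⟨aF, bF, ?_⟩
  ext x
  constructor
  · rintro ⟨lam, rfl⟩
    rw [Set.mem_iInter]
    rintro ⟨i, φ⟩
    by_cases hval : Valid φ
    · show dot (aF (i, φ)) _ ≤ dot (bF (i, φ)) _
      have ha : aF (i, φ) = (fun k => if k = i then (0 : Rmax) else ⊥) := by
        rw [haF]; simp only [if_pos hval]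
      have hb : bF (i, φ) = Bv i φ := by
        rw [hbF]; simp only [if_pos hval]
      rw [ha, hb, dot_unit]
      refine Finset.sup_le fun r _ => ?_
      have hcoe : ((ρ r φ : ℝ) : Rmax) = g r (φ r) := coe_unbot' (hval r)
      have h1 : lam r + g r (φ r)
          ≤ Finset.univ.sup fun r' => lam r' + g r' (φ r) :=
        Finset.le_sup (f := fun r' => lam r' + g r' (φ r)) (Finset.mem_univ r)
      have h2 : lam r + g r i
          = (g r i + ((-(ρ r φ) : ℝ) : Rmax)) + (lam r + g r (φ r)) := by
        rw [← hcoe, cancel₂ (g r i) (lam r) (ρ r φ), add_comm]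
      rw [h2]
      refine le_trans (add_le_add le_rfl h1) ?_
      have h3 : (g r i + ((-(ρ r φ) : ℝ) : Rmax)) ≤ Bv i φ (φ r) := by
        rw [hBv]
        refine le_trans (le_of_eq (if_pos rfl).symm)
          (Finset.le_sup (f := fun r' => if φ r' = φ r then g r' i + ((-(ρ r' φ) : ℝ) : Rmax) else ⊥)
            (Finset.mem_univ r))
      refine le_trans (add_le_add h3 le_rfl) ?_
      exact Finset.le_sup (f := fun j => Bv i φ j + Finset.univ.sup fun r' => lam r' + g r' j)
        (Finset.mem_univ (φ r))
    · show dot (aF (i, φ)) _ ≤ dot (bF (i, φ)) _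
      have ha : aF (i, φ) = fun _ => ⊥ := by rw [haF]; simp only [if_neg hval]
      rw [ha, dot_bot]
      exact bot_le
  · intro hx
    rw [Set.mem_iInter] at hx
    set supp : Fin p → Finset (Fin N) := fun r => Finset.univ.filter (fun j => g r j ≠ ⊥)
      with hsupp
    have hne : ∀ r, (supp r).Nonempty := by
      intro r
      obtain ⟨j, hj⟩ := hg r
      exact ⟨j, Finset.mem_filter.mpr ⟨Finset.mem_univ j, hj⟩⟩
    set f : Fin p → Fin N → Rmax := fun r j => x j + ((-((WithBot.unbotD 0 (g r j) : ℝ)) : ℝ) : Rmax)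
      with hf
    set lam : Fin p → Rmax := fun r => (supp r).inf' (hne r) (f r) with hlam
    refine ⟨lam, funext fun i => ?_⟩
    apply le_antisymm
    · choose φ hφmem hφval using fun r => Finset.exists_mem_eq_inf' (hne r) (f r)
      have hval : Valid φ := fun r => (Finset.mem_filter.mp (hφmem r)).2
      have hq := hx (i, φ)
      have ha : aF (i, φ) = (fun k => if k = i then (0 : Rmax) else ⊥) := by
        rw [haF]; simp only [if_pos hval]
      have hb : bF (i, φ) = Bv i φ := by
        rw [hbF]; simp only [if_pos hval]
      rw [hsSet, Set.mem_setOf_eq, ha, hb, dot_unit] at hq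
      refine le_trans hq ?_
      refine Finset.sup_le fun j _ => ?_
      have hBvj : Bv i φ j + x j
          = Finset.univ.sup fun r => (if φ r = j then g r i + ((-(ρ r φ) : ℝ) : Rmax) else ⊥) + x j := by
        rw [hBv]
        exact fsup_add _ _ _
      rw [hBvj]
      refine Finset.sup_le fun r _ => ?_
      by_cases hj : φ r = j
      · subst hj
        rw [if_pos rfl]
        have e1 : (g r i + ((-(ρ r φ) : ℝ) : Rmax)) + x (φ r)
            = g r i + (x (φ r) + ((-(ρ r φ) : ℝ) : Rmax)) := by abel
        rw [e1]
        have e2 : x (φ r) + ((-(ρ r φ) : ℝ) : Rmax) = lam r := by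
          rw [hlam]
          simp only []
          rw [hφval r]
        rw [e2, add_comm]
        exact Finset.le_sup (f := fun r => lam r + g r i) (Finset.mem_univ r)
      · rw [if_neg hj, WithBot.bot_add]
        exact bot_le
    · refine Finset.sup_le fun r _ => ?_
      by_cases hbi : g r i = ⊥
      · rw [hbi, WithBot.add_bot]
        exact bot_le
      · have hmem : i ∈ supp r := Finset.mem_filter.mpr ⟨Finset.mem_univ i, hbi⟩
        have h1 : lam r ≤ f r i := Finset.inf'_le _ hmem
        have h2 : lam r + g r i ≤ f r i + g r i := add_le_add h1 le_rfl
        refine le_trans h2 ?_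
        rw [hf]
        simp only []
        rw [← coe_unbot' hbi]
        exact le_of_eq (cancel₁ (x i) ((WithBot.unbotD 0 (g r i) : ℝ)))

lemma dot_snoc' {n : ℕ} (v : Fin (n+1) → Rmax) (x : Fin n → Rmax) :
    dot v (Fin.snoc x (0 : Rmax)) =
      max (Finset.univ.sup fun i => v i.castSucc + x i) (v (Fin.last n)) := by
  refine (sup_fin_succ (fun j => v j + (Fin.snoc x (0 : Rmax) : Fin (n+1) → Rmax) j)).trans ?_
  congr 1
  · exact Finset.sup_congr rfl fun i _ => by rw [Fin.snoc_castSucc]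
  · rw [Fin.snoc_last, add_zero]

lemma exists_enum {n : ℕ} {X : Set (Fin n → Rmax)} (hX : X.Finite) :
    ∃ (p : ℕ) (g : Fin p → Fin n → Rmax), Set.range g = X := by
  classical
  refine ⟨hX.toFinset.card, fun k => (hX.toFinset.equivFin.symm k : Fin n → Rmax), ?_⟩
  ext v
  constructor
  · rintro ⟨k, rfl⟩
    have := (hX.toFinset.equivFin.symm k).2
    rwa [Set.Finite.mem_toFinset] at this
  · intro hv
    exact ⟨hX.toFinset.equivFin ⟨v, (Set.Finite.mem_toFinset hX).mpr hv⟩, by simp⟩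

lemma hdh0 {n : ℕ} (z : Fin n → Rmax) : dh (Fin.snoc z (0 : Rmax)) = z := by
  funext i
  show (Fin.snoc z (0 : Rmax) : Fin (n+1) → Rmax) i.castSucc
      + ((-((WithBot.unbotD 0 ((Fin.snoc z (0 : Rmax) : Fin (n+1) → Rmax) (Fin.last n)) : ℝ)) : ℝ) : Rmax)
      = z i
  rw [Fin.snoc_castSucc, Fin.snoc_last]
  norm_num

end StmtAux

open StmtAux in
/-- a subset of `ℝ_max^n` is a max-plus polyhedron if, and only if,
it is of the form `co(Z) ⊕ cone(Y)` with `Z`, `Y` finite. -/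
theorem stmt_1 {n : ℕ} (C : Set (Fin n → Rmax)) :
    IsPolyhedron C ↔
      ∃ Z Y : Set (Fin n → Rmax), Z.Finite ∧ Y.Finite ∧
        C = tropSum (tropCo Z) (tropCone Y) := by

  classical
  constructor
  · rintro ⟨m, H, hH, rfl⟩
    choose a b c d hEq using hH
    set A : Fin m → Fin (n+1) → Rmax := fun k => Fin.snoc (a k) (c k) with hA
    set B : Fin m → Fin (n+1) → Rmax := fun k => Fin.snoc (b k) (d k) with hB
    obtain ⟨ι, hι, g, hg⟩ := iInter_hs_eq_coneIx A B
    letI := hι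
    have hmem : ∀ x, x ∈ ⋂ k, H k ↔ Fin.snoc x (0 : Rmax) ∈ coneIx g := by
      intro x
      rw [← hg, Set.mem_iInter, Set.mem_iInter]
      refine forall_congr' fun k => ?_
      rw [hEq k]
      show (max (Finset.univ.sup fun i => a k i + x i) (c k)
          ≤ max (Finset.univ.sup fun j => b k j + x j) (d k))
        ↔ dot (A k) (Fin.snoc x (0 : Rmax)) ≤ dot (B k) (Fin.snoc x (0 : Rmax))
      rw [dot_snoc', dot_snoc']
      have hAc : ∀ i : Fin n, A k i.castSucc = a k i := fun i => by
        rw [hA]; exact Fin.snoc_castSucc _ _ _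
      have hBc : ∀ i : Fin n, B k i.castSucc = b k i := fun i => by
        rw [hB]; exact Fin.snoc_castSucc _ _ _
      have hAl : A k (Fin.last n) = c k := by rw [hA]; exact Fin.snoc_last _ _
      have hBl : B k (Fin.last n) = d k := by rw [hB]; exact Fin.snoc_last _ _
      have hsa : (Finset.univ.sup fun i => A k i.castSucc + x i)
          = Finset.univ.sup fun i => a k i + x i :=
        Finset.sup_congr rfl fun i _ => by rw [hAc i]
      have hsb : (Finset.univ.sup fun i => B k i.castSucc + x i)
          = Finset.univ.sup fun i => b k i + x i :=
        Finset.sup_congr rfl fun i _ => by rw [hBc i]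
      rw [hAl, hBl, hsa, hsb]
    have hcone : coneIx g = tropCone (Set.range g) := coneIx_eq_tropCone g
    refine ⟨dhZ (Set.range g), dhY (Set.range g), ?_, ?_, ?_⟩
    · exact (((Set.finite_range g).subset (fun w hw => hw.1)).image dh)
    · exact (((Set.finite_range g).subset (fun w hw => hw.1)).image _)
    · ext x
      rw [hmem x, hcone]
      exact homog (Set.range g) x
  · rintro ⟨Z, Y, hZfin, hYfin, rfl⟩
    set W : Set (Fin (n+1) → Rmax) :=
      ((fun z => Fin.snoc z (0 : Rmax)) '' Z) ∪ ((fun y => Fin.snoc y (⊥ : Rmax)) '' Y) with hW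
    have hzero_ne : ((0 : Rmax)) ≠ ⊥ := by simp
    have hdhZ : dhZ W = Z := by
      ext z
      constructor
      · rintro ⟨w, ⟨hwW, hwlast⟩, rfl⟩
        rcases hwW with ⟨z0, hz0, rfl⟩ | ⟨y0, hy0, rfl⟩
        · show dh (Fin.snoc z0 (0 : Rmax)) ∈ Z
          rw [hdh0 z0]; exact hz0
        · simp only [Fin.snoc_last, ne_eq, not_true_eq_false] at hwlast
      · intro hz
        refine ⟨Fin.snoc z (0 : Rmax), ⟨Or.inl ⟨z, hz, rfl⟩, ?_⟩, hdh0 z⟩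
        show (Fin.snoc z (0 : Rmax) : Fin (n+1) → Rmax) (Fin.last n) ≠ ⊥
        rw [Fin.snoc_last]; exact hzero_ne
    have hdhY : dhY W = Y := by
      ext y
      constructor
      · rintro ⟨w, ⟨hwW, hwlast⟩, rfl⟩
        rcases hwW with ⟨z0, hz0, rfl⟩ | ⟨y0, hy0, rfl⟩
        · simp only [Fin.snoc_last] at hwlast
          exact absurd hwlast hzero_ne
        · show (fun i : Fin n => (Fin.snoc y0 (⊥ : Rmax) : Fin (n+1) → Rmax) i.castSucc) ∈ Y
          have hfy : (fun i : Fin n => (Fin.snoc y0 (⊥ : Rmax) : Fin (n+1) → Rmax) i.castSucc)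
              = y0 := by
            funext i; rw [Fin.snoc_castSucc]
          rw [hfy]; exact hy0
      · intro hy
        refine ⟨Fin.snoc y (⊥ : Rmax), ⟨Or.inr ⟨y, hy, rfl⟩, Fin.snoc_last _ _⟩, ?_⟩
        show (fun i : Fin n => (Fin.snoc y (⊥ : Rmax) : Fin (n+1) → Rmax) i.castSucc) = y
        funext i; rw [Fin.snoc_castSucc]
    have hkey : ∀ x, x ∈ tropSum (tropCo Z) (tropCone Y) ↔
        Fin.snoc x (0 : Rmax) ∈ tropCone W := by
      intro x
      rw [← hdhZ, ← hdhY]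
      exact (homog W x).symm
    have hWfin : W.Finite := (hZfin.image _).union (hYfin.image _)
    have hW'fin : (W \ {fun _ => (⊥ : Rmax)}).Finite := hWfin.subset Set.diff_subset
    obtain ⟨p, g, hrange⟩ := exists_enum hW'fin
    have hgne : ∀ r, ∃ j, g r j ≠ ⊥ := by
      intro r
      by_contra hcon
      push_neg at hcon
      have hmem : g r ∈ W \ {fun _ => (⊥ : Rmax)} := hrange ▸ Set.mem_range_self r
      exact hmem.2 (funext fun j => hcon j)
    obtain ⟨aF, bF, hiq⟩ := coneIx_eq_iInter_hs g hgne
    have hWQ : tropCone W = ⋂ q, hsSet (aF q) (bF q) := by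
      rw [← tropCone_sdiff_bot W, ← hrange, ← coneIx_eq_tropCone g, hiq]
    set e := Fintype.equivFin (Fin (n + 1) × (Fin p → Fin (n + 1))) with he
    refine ⟨Fintype.card (Fin (n + 1) × (Fin p → Fin (n + 1))), fun k =>
      {x | max (Finset.univ.sup fun i => aF (e.symm k) i.castSucc + x i)
            (aF (e.symm k) (Fin.last n))
        ≤ max (Finset.univ.sup fun j => bF (e.symm k) j.castSucc + x j)
            (bF (e.symm k) (Fin.last n))},
      fun k => ⟨fun i => aF (e.symm k) i.castSucc, fun j => bF (e.symm k) j.castSucc,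
        aF (e.symm k) (Fin.last n), bF (e.symm k) (Fin.last n), rfl⟩, ?_⟩
    ext x
    rw [hkey x, hWQ, Set.mem_iInter, Set.mem_iInter]
    constructor
    · intro hx k
      have hthis := hx (e.symm k)
      rw [hsSet, Set.mem_setOf_eq, dot_snoc', dot_snoc'] at hthis
      exact hthis
    · intro hx q
      have hthis := hx (e q)
      rw [Set.mem_setOf_eq] at hthis
      rw [hsSet, Set.mem_setOf_eq, dot_snoc', dot_snoc']
      simp only [Equiv.symm_apply_apply] at hthis
      exact hthis
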